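/- Let μ_1,…,μ_m be nonzero complex numbers. For each positive integer n let a_{1,n},…,a_{m,n} be defined by ∏_{j=1}^m (z − μ_j^n) = z^m + a_{1,n} z^{m−1} + ⋯ + a_{m,n}, and let r_n be the largest nonnegative real root of x^m − Σ_{i=1}^m |a_{i,n}| x^{m−i} (i.e., r_n = λ(F̄_n), the spectral radius of the entrywise absolute value of the companion-form matrix F_n with characteristic polynomial z^m + a_{1,n} z^{m−1} + ⋯ + a_{m,n}). Then lim_{n→∞} (1/n)·log₂ r_n = log₂ max_{1≤i≤m} |μ_i|. (Consequently the exponent threshold β_n = (2/n) log₂ λ(F̄_n) converges to β* = 2 log₂ max_i |μ_i|.) -/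

import Mathlib

/-- `acoef m μ n i` is the coefficient `a_{i,n}` (for `1 ≤ i ≤ m`) defined by
`∏_{j=1}^m (z − μ_j^n) = z^m + a_{1,n} z^{m-1} + ⋯ + a_{m,n}`;
i.e. the coefficient of `z^{m-i}` in the monic polynomial with roots `μ_1^n, …, μ_m^n`. -/
noncomputable def acoef (m : ℕ) (μ : Fin m → ℂ) (n i : ℕ) : ℂ :=
  (∏ j : Fin m, (Polynomial.X - Polynomial.C (μ j ^ n))).coeff (m - i)

open Polynomial Finset Filter Real

lemma abs_multiset_prod_le {b : ℝ} (hb : 0 ≤ b) :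
    ∀ (t : Multiset ℂ), (∀ x ∈ t, ‖x‖ ≤ b) →
      ‖t.prod‖ ≤ b ^ Multiset.card t := by
  intro t
  induction t using Multiset.induction with
  | empty => simp
  | cons a t ih =>
    intro h
    rw [Multiset.prod_cons, norm_mul, Multiset.card_cons, pow_succ']
    exact mul_le_mul (h a (Multiset.mem_cons_self a t))
      (ih fun x hx => h x (Multiset.mem_cons_of_mem hx))
      (norm_nonneg _) hb

lemma acoef_abs_le (m : ℕ) (μ : Fin m → ℂ) {B : ℝ} (hB : ∀ j, ‖μ j‖ ≤ B)
    (hB0 : 0 ≤ B) (n : ℕ) {i : ℕ} (hi : i ∈ Finset.Icc 1 m) :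
    ‖acoef m μ n i‖ ≤ (m.choose i : ℝ) * (B ^ n) ^ i := by
  simp only [Finset.mem_Icc] at hi
  set s : Multiset ℂ := Multiset.map (fun j => μ j ^ n) Finset.univ.val with hs
  have hcard : Multiset.card s = m := by simp [hs]
  have hprod : (∏ j : Fin m, (X - C (μ j ^ n))) = (s.map fun t => X - C t).prod := by
    rw [hs, Multiset.map_map, Finset.prod_eq_multiset_prod]
    rfl
  have hk : m - i ≤ Multiset.card s := by omega
  have hcoeff : acoef m μ n i = (-1) ^ i * s.esymm i := by
    rw [acoef, hprod, Multiset.prod_X_sub_C_coeff s hk, hcard]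
    congr 2 <;> omega
  rw [hcoeff]
  rw [norm_mul, norm_pow, norm_neg, norm_one, one_pow, one_mul]
  have habs : ‖s.esymm i‖ = ‖s.esymm i‖ := rfl
  rw [habs, Multiset.esymm]
  refine le_trans (norm_multiset_sum_le _) ?_
  rw [Multiset.map_map]
  have hb : ∀ x ∈ Multiset.map (fun t : Multiset ℂ => ‖t.prod‖) (s.powersetCard i),
      x ≤ (B ^ n) ^ i := by
    intro x hx
    rw [Multiset.mem_map] at hx
    obtain ⟨t, ht, rfl⟩ := hx
    rw [Multiset.mem_powersetCard] at ht
    calc ‖t.prod‖ ≤ (B ^ n) ^ Multiset.card t := by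
          refine abs_multiset_prod_le (pow_nonneg hB0 n) t ?_
          intro x hx
          have := Multiset.mem_of_le ht.1 hx
          rw [hs, Multiset.mem_map] at this
          obtain ⟨j, -, rfl⟩ := this
          calc ‖μ j ^ n‖ = ‖μ j‖ ^ n := by
                rw [norm_pow]
            _ ≤ B ^ n := pow_le_pow_left₀ (norm_nonneg _) (hB j) n
      _ = (B ^ n) ^ i := by rw [ht.2]
  refine le_trans (Multiset.sum_le_card_nsmul _ _ hb) ?_
  rw [Multiset.card_map, Multiset.card_powersetCard, hcard, nsmul_eq_mul]

lemma eval_lower (m : ℕ) (μ : Fin m → ℂ) (j0 : Fin m) (n : ℕ) :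
    (‖μ j0‖ ^ n) ^ m
      ≤ ∑ i ∈ Finset.Icc 1 m, ‖acoef m μ n i‖ * (‖μ j0‖ ^ n) ^ (m - i) := by
  set P : Polynomial ℂ := ∏ j : Fin m, (X - C (μ j ^ n)) with hP
  have hmonic : P.Monic := monic_prod_of_monic _ _ fun j _ => monic_X_sub_C _
  have hdeg : P.natDegree = m := by
    rw [hP, natDegree_prod _ _ fun j _ => X_sub_C_ne_zero _]
    simp only [natDegree_X_sub_C, Finset.sum_const, Finset.card_univ, Fintype.card_fin,
      smul_eq_mul, mul_one]
  set w : ℂ := μ j0 ^ n with hw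
  have hroot : P.eval w = 0 := by
    rw [hP, eval_prod]
    exact Finset.prod_eq_zero (Finset.mem_univ j0) (by simp [hw])
  have hev : P.eval w = ∑ k ∈ Finset.range (m + 1), P.coeff k * w ^ k :=
    eval_eq_sum_range' (by omega) w
  have hcm : P.coeff m = 1 := by
    have := hmonic.coeff_natDegree
    rwa [hdeg] at this
  have hsum : w ^ m = -∑ k ∈ Finset.range m, P.coeff k * w ^ k := by
    rw [Finset.sum_range_succ, hcm, one_mul, hroot] at hev
    linear_combination -hev
  have habs : ‖w‖ ^ m ≤ ∑ k ∈ Finset.range m, ‖P.coeff k‖ * ‖w‖ ^ k := by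
    calc ‖w‖ ^ m = ‖w ^ m‖ := (norm_pow _ _).symm
      _ = ‖∑ k ∈ Finset.range m, P.coeff k * w ^ k‖ := by rw [hsum, norm_neg]
      _ ≤ ∑ k ∈ Finset.range m, ‖P.coeff k * w ^ k‖ :=
          norm_sum_le _ _
      _ = ∑ k ∈ Finset.range m, ‖P.coeff k‖ * ‖w‖ ^ k := by
          simp [norm_mul, norm_pow]
  have hre : ∑ k ∈ Finset.range m, ‖P.coeff k‖ * ‖w‖ ^ k
      = ∑ i ∈ Finset.Icc 1 m, ‖acoef m μ n i‖ * (‖μ j0‖ ^ n) ^ (m - i) := by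
    refine Finset.sum_nbij' (fun k => m - k) (fun i => m - i) ?_ ?_ ?_ ?_ ?_
    · intro k hk; simp only [Finset.mem_range] at hk; simp only [Finset.mem_Icc]; omega
    · intro i hi; simp only [Finset.mem_Icc] at hi; simp only [Finset.mem_range]; omega
    · intro k hk; simp only [Finset.mem_range] at hk; show m - (m - k) = k; omega
    · intro i hi; simp only [Finset.mem_Icc] at hi; show m - (m - i) = i; omega
    · intro k hk
      simp only [Finset.mem_range] at hk
      have h1 : m - (m - k) = k := by omega
      rw [acoef, ← hP, h1, hw, norm_pow]
  calc (‖μ j0‖ ^ n) ^ m = ‖w‖ ^ m := by rw [hw, norm_pow]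
    _ ≤ _ := habs.trans_eq hre

/-- Let `r_n` be the largest nonnegative real root of
`x^m − Σ_{i=1}^m |a_{i,n}| x^{m-i}` (equivalently `r_n = λ(F̄_n)`). Then
`(1/n) log₂ r_n → log₂ max_i |μ_i|`; consequently the exponent threshold
`β_n = (2/n) log₂ λ(F̄_n)` converges to `β* = 2 log₂ max_i |μ_i|`. -/
theorem exponent_threshold_tendsto (m : ℕ) (hm : 1 ≤ m) (μ : Fin m → ℂ)
    (hμ0 : ∀ i, μ i ≠ 0)
    (r : ℕ → ℝ) (hr0 : ∀ n, 0 ≤ r n)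
    (hr_root : ∀ n, (r n) ^ m
      = ∑ i ∈ Finset.Icc 1 m, ‖acoef m μ n i‖ * (r n) ^ (m - i))
    (hr_max : ∀ n, ∀ s : ℝ, 0 ≤ s →
      s ^ m = ∑ i ∈ Finset.Icc 1 m, ‖acoef m μ n i‖ * s ^ (m - i) →
      s ≤ r n) :
    Filter.Tendsto (fun n : ℕ => (1 / (n : ℝ)) * Real.logb 2 (r n))
      Filter.atTop
      (nhds (Real.logb 2 (Finset.univ.sup'
        (Finset.univ_nonempty_iff.mpr (Fin.pos_iff_nonempty.mp (by omega)))
        (fun i : Fin m => ‖μ i‖)))) := by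
  have hne : (Finset.univ : Finset (Fin m)).Nonempty :=
    Finset.univ_nonempty_iff.mpr (Fin.pos_iff_nonempty.mp (by omega))
  set M : ℝ := Finset.univ.sup' hne fun i => ‖μ i‖ with hMdef
  show Filter.Tendsto (fun n : ℕ => (1 / (n : ℝ)) * Real.logb 2 (r n)) Filter.atTop
    (nhds (Real.logb 2 M))
  obtain ⟨j0, -, hj0⟩ := Finset.exists_mem_eq_sup' hne fun i => ‖μ i‖
  have hMpos : 0 < M := by rw [hMdef, hj0]; exact norm_pos_iff.mpr (hμ0 j0)
  have hMle : ∀ j, ‖μ j‖ ≤ M := fun j => Finset.le_sup' (f := fun i => ‖μ i‖) (Finset.mem_univ j)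
  have hMn_pos : ∀ n : ℕ, (0:ℝ) < M ^ n := fun n => pow_pos hMpos n
  -- lower bound : M ^ n ≤ r n
  have hlow : ∀ n : ℕ, M ^ n ≤ r n := by
    intro n
    set f : ℝ → ℝ := fun x =>
      x ^ m - ∑ i ∈ Finset.Icc 1 m, ‖acoef m μ n i‖ * x ^ (m - i) with hf
    have hf_cont : Continuous f := by
      refine (continuous_pow m).sub (continuous_finset_sum _ fun i _ => ?_)
      exact continuous_const.mul (continuous_pow _)
    set a : ℝ := M ^ n with ha
    have hfa : f a ≤ 0 := by
      have := eval_lower m μ j0 n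
      rw [← hj0, ← hMdef] at this
      simp only [hf, ha]
      linarith
    set S : ℝ := ∑ i ∈ Finset.Icc 1 m, ‖acoef m μ n i‖ with hS
    have hS0 : 0 ≤ S := Finset.sum_nonneg fun i _ => norm_nonneg _
    set b : ℝ := max a (max 1 S) with hb
    have hab : a ≤ b := le_max_left _ _
    have hb1 : (1:ℝ) ≤ b := le_trans (le_max_left _ _) (le_max_right _ _)
    have hbS : S ≤ b := le_trans (le_max_right _ _) (le_max_right _ _)
    have hfb : 0 ≤ f b := by
      have h1 : ∑ i ∈ Finset.Icc 1 m, ‖acoef m μ n i‖ * b ^ (m - i)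
          ≤ S * b ^ (m - 1) := by
        rw [hS, Finset.sum_mul]
        refine Finset.sum_le_sum fun i hi => ?_
        simp only [Finset.mem_Icc] at hi
        exact mul_le_mul_of_nonneg_left
          (pow_le_pow_right₀ hb1 (by omega)) (norm_nonneg _)
      have h2 : S * b ^ (m - 1) ≤ b * b ^ (m - 1) :=
        mul_le_mul_of_nonneg_right hbS (pow_nonneg (by linarith) _)
      have h3 : b * b ^ (m - 1) = b ^ m := by
        rw [← pow_succ']
        congr 1
        omega
      simp only [hf]
      nlinarith
    have h0mem : (0:ℝ) ∈ Set.Icc (f a) (f b) := ⟨hfa, hfb⟩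
    obtain ⟨t, htmem, htroot⟩ := intermediate_value_Icc hab hf_cont.continuousOn h0mem
    have ht0 : 0 ≤ t := le_trans (le_of_lt (hMn_pos n)) htmem.1
    have htr : t ≤ r n := by
      refine hr_max n t ht0 ?_
      simp only [hf] at htroot
      linarith
    exact le_trans htmem.1 htr
  have hrpos : ∀ n : ℕ, 0 < r n := fun n => lt_of_lt_of_le (hMn_pos n) (hlow n)
  -- upper bound : r n ≤ c * M ^ n
  set u : ℝ := (2:ℝ) ^ ((m:ℝ)⁻¹) with hu
  have hminv : (0:ℝ) < (m:ℝ)⁻¹ := by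
    have : (0:ℝ) < m := by exact_mod_cast hm
    positivity
  have hu1 : 1 < u := by
    rw [hu]
    exact Real.one_lt_rpow_iff_of_pos (by norm_num) |>.mpr (Or.inl ⟨by norm_num, hminv⟩)
  have hum : u ^ m = 2 := by
    rw [hu, ← Real.rpow_natCast ((2:ℝ) ^ ((m:ℝ)⁻¹)) m, ← Real.rpow_mul (by norm_num),
      inv_mul_cancel₀ (Nat.cast_ne_zero.mpr (by omega)), Real.rpow_one]
  set c : ℝ := (u - 1)⁻¹ with hc
  have hc0 : 0 < c := by rw [hc]; exact inv_pos.mpr (by linarith)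
  have hup : ∀ n : ℕ, r n ≤ c * M ^ n := by
    intro n
    have hbound : (r n) ^ m ≤ ∑ i ∈ Finset.Icc 1 m,
        (m.choose i : ℝ) * (M ^ n) ^ i * (r n) ^ (m - i) := by
      rw [hr_root n]
      refine Finset.sum_le_sum fun i hi => ?_
      exact mul_le_mul_of_nonneg_right (acoef_abs_le m μ hMle (le_of_lt hMpos) n hi)
        (pow_nonneg (hr0 n) _)
    have hbinom : ∑ i ∈ Finset.Icc 1 m, (m.choose i : ℝ) * (M ^ n) ^ i * (r n) ^ (m - i)
        = (M ^ n + r n) ^ m - (r n) ^ m := by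
      rw [add_pow]
      have hsplit : Finset.range (m + 1) = insert 0 (Finset.Icc 1 m) := by
        ext x; simp only [Finset.mem_range, Finset.mem_insert, Finset.mem_Icc]; omega
      rw [hsplit, Finset.sum_insert (by simp)]
      simp only [pow_zero, one_mul, Nat.choose_zero_right, Nat.cast_one, mul_one, Nat.sub_zero]
      rw [add_comm ((r n) ^ m), add_sub_cancel_right]
      refine Finset.sum_congr rfl fun i hi => ?_
      ring
    have h2 : 2 * (r n) ^ m ≤ (M ^ n + r n) ^ m := by
      rw [hbinom] at hbound; linarith
    have h3 : (u * r n) ^ m ≤ (M ^ n + r n) ^ m := by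
      rw [mul_pow, hum]; exact h2
    have h4 : u * r n ≤ M ^ n + r n :=
      le_of_pow_le_pow_left₀ (by omega) (by have := hMn_pos n; have := hr0 n; linarith) h3
    have h5 : (u - 1) * r n ≤ M ^ n := by nlinarith
    rw [hc, inv_mul_eq_div, le_div_iff₀ (by linarith : (0:ℝ) < u - 1)]
    nlinarith
  -- final limit computation
  have key : Filter.Tendsto (fun n : ℕ => (1 / (n:ℝ)) * Real.logb 2 (r n / M ^ n))
      Filter.atTop (nhds 0) := by
    have hg : Filter.Tendsto (fun n : ℕ => (1 / (n:ℝ)) * Real.logb 2 c)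
        Filter.atTop (nhds 0) := by
      have := tendsto_one_div_atTop_nhds_zero_nat.mul_const (Real.logb 2 c)
      simpa using this
    refine squeeze_zero' ?_ ?_ hg
    · filter_upwards [Filter.eventually_ge_atTop 1] with n hn
      have h1 : (1:ℝ) ≤ r n / M ^ n := (one_le_div (hMn_pos n)).mpr (hlow n)
      have : 0 ≤ Real.logb 2 (r n / M ^ n) := Real.logb_nonneg (by norm_num) h1
      positivity
    · filter_upwards [Filter.eventually_ge_atTop 1] with n hn
      refine mul_le_mul_of_nonneg_left ?_ (by positivity)
      refine Real.logb_le_logb_of_le (by norm_num) (div_pos (hrpos n) (hMn_pos n)) ?_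
      rw [div_le_iff₀ (hMn_pos n)]
      calc r n ≤ c * M ^ n := hup n
        _ = c * M ^ n := rfl
  have final : Filter.Tendsto (fun n : ℕ => Real.logb 2 M + (1 / (n:ℝ)) * Real.logb 2 (r n / M ^ n))
      Filter.atTop (nhds (Real.logb 2 M + 0)) := tendsto_const_nhds.add key
  rw [add_zero] at final
  refine final.congr' ?_
  filter_upwards [Filter.eventually_ge_atTop 1] with n hn
  have hn0 : (n:ℝ) ≠ 0 := Nat.cast_ne_zero.mpr (by omega)
  rw [Real.logb_div (ne_of_gt (hrpos n)) (ne_of_gt (hMn_pos n)), Real.logb_pow]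
  field_simp
  ring
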